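/- Let F:[0,1]→ℝ and define G on the closed unit disc 𝔻²⊂ℝ² by G(x,y)=F(√(x²+y²)). Then G is C¹ on 𝔻² if and only if F is C¹ on [0,1] with F'(0)=0. -/

import Mathlib

open Set

local notation "E2" => EuclideanSpace ℝ (Fin 2)

lemma hasFDerivAt_norm_of_ne {E : Type*} [NormedAddCommGroup E] [InnerProductSpace ℝ E]
    {x : E} (hx : x ≠ 0) :
    HasFDerivAt (fun y : E => ‖y‖) (‖x‖⁻¹ • innerSL ℝ x) x := by
  have h1 : HasFDerivAt (fun y : E => ‖y‖ ^ 2) (2 • innerSL ℝ x) x :=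
    (hasStrictFDerivAt_norm_sq x).hasFDerivAt
  have h2 : (‖x‖ : ℝ) ^ 2 ≠ 0 := pow_ne_zero _ (norm_ne_zero_iff.2 hx)
  have h3 := h1.sqrt h2
  have hxpos : (0:ℝ) < ‖x‖ := norm_pos_iff.2 hx
  have hfun : (fun y : E => Real.sqrt (‖y‖ ^ 2)) = fun y : E => ‖y‖ := by
    funext y; rw [Real.sqrt_sq (norm_nonneg y)]
  rw [hfun] at h3
  convert h3 using 1
  rw [Real.sqrt_sq (norm_nonneg x)]
  ext y
  simp only [ContinuousLinearMap.coe_smul', Pi.smul_apply, ContinuousLinearMap.smul_apply,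
    smul_eq_mul, nsmul_eq_mul, Nat.cast_ofNat]
  field_simp

set_option synthInstance.maxHeartbeats 1000000 in
set_option maxHeartbeats 1000000 in
/-- The rotationally symmetric extension G(x,y) = F(√(x²+y²)) of a radial profile F to
the closed unit disc is C¹ if and only if F is C¹ on [0,1] with F'(0) = 0. -/
theorem stmt2 (F : ℝ → ℝ) (G : EuclideanSpace ℝ (Fin 2) → ℝ)
    (hG : ∀ p : EuclideanSpace ℝ (Fin 2), G p = F ‖p‖) :
    ContDiffOn ℝ 1 G (Metric.closedBall 0 1) ↔
      (ContDiffOn ℝ 1 F (Icc 0 1) ∧ derivWithin F (Icc 0 1) 0 = 0) := by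
  have hGeq : G = fun p => F ‖p‖ := funext hG
  subst hGeq
  have hIcc : UniqueDiffOn ℝ (Icc (0:ℝ) 1) := uniqueDiffOn_Icc zero_lt_one
  have h0mem : (0:ℝ) ∈ Icc (0:ℝ) 1 := ⟨le_refl _, zero_le_one⟩
  set e : E2 := EuclideanSpace.single 0 1 with he
  have hne : ‖e‖ = 1 := by simp [he, EuclideanSpace.norm_single]
  constructor
  · rintro hC
    have hγ : ContDiff ℝ 1 (fun r : ℝ => r • e) := (contDiff_id.smul contDiff_const)
    have hmaps : MapsTo (fun r : ℝ => r • e) (Icc 0 1) (Metric.closedBall 0 1) := by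
      intro r hr
      simp only [Metric.mem_closedBall, dist_zero_right, norm_smul, hne, mul_one,
        Real.norm_eq_abs]
      rw [abs_of_nonneg hr.1]; exact hr.2
    have hcomp : ContDiffOn ℝ 1 (fun r : ℝ => F ‖r • e‖) (Icc 0 1) :=
      hC.comp (hγ.contDiffOn) hmaps
    have hFr : ∀ r ∈ Icc (0:ℝ) 1, F ‖r • e‖ = F r := by
      intro r hr
      rw [norm_smul, hne, mul_one, Real.norm_eq_abs, abs_of_nonneg hr.1]
    have hCF : ContDiffOn ℝ 1 F (Icc 0 1) := hcomp.congr fun r hr => (hFr r hr).symm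
    refine ⟨hCF, ?_⟩
    have hball : Metric.closedBall (0:E2) 1 ∈ nhds (0:E2) := Metric.closedBall_mem_nhds 0 one_pos
    have hdG : DifferentiableAt ℝ (fun p : E2 => F ‖p‖) 0 :=
      ((hC.differentiableOn one_ne_zero) 0 (Metric.mem_closedBall_self zero_le_one)).differentiableAt hball
    set L := fderiv ℝ (fun p : E2 => F ‖p‖) 0 with hL
    have hdG' : HasFDerivAt (fun p : E2 => F ‖p‖) L 0 := hdG.hasFDerivAt
    have key : ∀ v : E2, ‖v‖ = 1 → HasDerivWithinAt F (L v) (Icc 0 1) 0 := by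
      intro v hv
      have hγv : HasDerivAt (fun r : ℝ => r • v) v 0 := by
        simpa using (hasDerivAt_id (0:ℝ)).smul_const v
      have hdG'' : HasFDerivAt (fun p : E2 => F ‖p‖) L ((0:ℝ) • v) := by
        rw [zero_smul]; exact hdG'
      have h1 := hdG''.comp_hasDerivAt 0 hγv
      have h2 : HasDerivWithinAt (fun r : ℝ => F ‖r • v‖) (L v) (Icc 0 1) 0 := by
        exact h1.hasDerivWithinAt
      refine h2.congr (fun r hr => ?_) (by simp)
      rw [norm_smul, hv, mul_one, Real.norm_eq_abs, abs_of_nonneg hr.1]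
    have k1 := key e hne
    have k2 := key (-e) (by rw [norm_neg]; exact hne)
    have hud : UniqueDiffWithinAt ℝ (Icc (0:ℝ) 1) 0 := hIcc 0 h0mem
    have e1 : derivWithin F (Icc 0 1) 0 = L e := k1.derivWithin hud
    have e2 : derivWithin F (Icc 0 1) 0 = L (-e) := k2.derivWithin hud
    have hneg : L (-e) = - L e := map_neg L e
    have h3 : L e = - L e := by rw [← hneg, ← e2, ← e1]
    rw [e1]; linarith
  · rintro ⟨hF, h0⟩
    set f' := derivWithin F (Icc (0:ℝ) 1) with hf'
    have hf'cont : ContinuousOn f' (Icc 0 1) := hF.continuousOn_derivWithin hIcc le_rfl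
    have key : ∀ p : E2, ‖p‖ < 1 →
        HasFDerivAt (fun q : E2 => F ‖q‖) ((f' ‖p‖ * ‖p‖⁻¹) • innerSL ℝ p) p := by
      intro p hp
      by_cases hp0 : p = 0
      · subst hp0
        have hzero : ((f' ‖(0:E2)‖ * ‖(0:E2)‖⁻¹) • innerSL ℝ (0:E2)) = 0 := by simp
        rw [hzero]
        have hd : HasDerivWithinAt F 0 (Icc 0 1) 0 := by
          have := ((hF 0 h0mem).differentiableWithinAt one_ne_zero).hasDerivWithinAt
          rwa [← hf', h0] at this
        have hlo : (fun r : ℝ => F r - F 0) =o[nhdsWithin 0 (Icc 0 1)] fun r => r := by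
          have := hd.hasFDerivWithinAt.isLittleO
          simpa using this
        have htend : Filter.Tendsto (fun q : E2 => ‖q‖) (nhds 0) (nhdsWithin 0 (Icc 0 1)) := by
          rw [nhdsWithin_Icc_eq_nhdsGE zero_lt_one, tendsto_nhdsWithin_iff]
          exact ⟨by simpa using continuous_norm.tendsto (0:E2),
            Filter.Eventually.of_forall fun q => norm_nonneg q⟩
        have hlo2 : (fun q : E2 => F ‖q‖ - F 0) =o[nhds 0] fun q : E2 => ‖q‖ :=
          hlo.comp_tendsto htend
        rw [hasFDerivAt_iff_isLittleO]
        have heq : (fun q : E2 => F ‖q‖ - F ‖(0:E2)‖ - (0 : E2 →L[ℝ] ℝ) (q - 0)) =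
            fun q : E2 => F ‖q‖ - F 0 := by funext q; simp
        rw [heq]
        calc (fun q : E2 => F ‖q‖ - F 0) =o[nhds 0] fun q : E2 => ‖q‖ := hlo2
          _ =O[nhds 0] fun q : E2 => q - 0 := by
            simpa using (Asymptotics.isBigO_refl (fun q : E2 => q) (nhds 0)).norm_left
      · have hnp : (0:ℝ) < ‖p‖ := norm_pos_iff.2 hp0
        have hdF : HasDerivAt F (f' ‖p‖) ‖p‖ := by
          have hmem : Icc (0:ℝ) 1 ∈ nhds ‖p‖ := Icc_mem_nhds hnp hp
          have := ((hF ‖p‖ ⟨hnp.le, hp.le⟩).differentiableWithinAt one_ne_zero).hasDerivWithinAt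
          exact this.hasDerivAt hmem
        have hdn := hasFDerivAt_norm_of_ne hp0
        have := hdF.comp_hasFDerivAt p hdn
        rw [← smul_smul]; exact this
    apply contDiffOn_of_locally_contDiffOn
    intro x hx
    by_cases hx0 : x = 0
    · refine ⟨Metric.ball 0 1, Metric.isOpen_ball, by simp [hx0], ?_⟩
      have hinter : Metric.closedBall (0:E2) 1 ∩ Metric.ball 0 1 = Metric.ball 0 1 :=
        inter_eq_self_of_subset_right Metric.ball_subset_closedBall
      rw [hinter]
      have h1 : (1 : WithTop ℕ∞) = 0 + 1 := by norm_num
      rw [h1, contDiffOn_succ_iff_fderiv_of_isOpen Metric.isOpen_ball]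
      refine ⟨fun p hp => ((key p (by simpa using hp)).differentiableAt).differentiableWithinAt,
        by simp, ?_⟩
      rw [contDiffOn_zero]
      have hfd : ∀ p ∈ Metric.ball (0:E2) 1,
          fderiv ℝ (fun q : E2 => F ‖q‖) p = (f' ‖p‖ * ‖p‖⁻¹) • innerSL ℝ p := fun p hp =>
        (key p (by simpa using hp)).fderiv
      refine ContinuousOn.congr ?_ hfd
      intro p hp
      by_cases hp0 : p = 0
      · subst hp0
        rw [ContinuousWithinAt]
        have hΦ0 : ((f' ‖(0:E2)‖ * ‖(0:E2)‖⁻¹) • innerSL ℝ (0:E2)) = 0 := by simp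
        rw [hΦ0, tendsto_zero_iff_norm_tendsto_zero]
        have hbound : ∀ q : E2, ‖(f' ‖q‖ * ‖q‖⁻¹) • innerSL ℝ q‖ ≤ |f' ‖q‖| := by
          intro q
          rcases eq_or_ne q 0 with rfl | hq
          · simp
          · have hq' : (0:ℝ) < ‖q‖ := norm_pos_iff.2 hq
            rw [norm_smul (f' ‖q‖ * ‖q‖⁻¹) (innerSL ℝ q), innerSL_apply_norm,
              Real.norm_eq_abs, abs_mul, abs_inv, abs_norm,
              mul_assoc, inv_mul_cancel₀ hq'.ne', mul_one]
        have htn : Filter.Tendsto (fun q : E2 => ‖q‖)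
            (nhdsWithin 0 (Metric.ball 0 1)) (nhdsWithin 0 (Icc 0 1)) := by
          rw [tendsto_nhdsWithin_iff]
          refine ⟨?_, eventually_nhdsWithin_of_forall fun q hq =>
            ⟨norm_nonneg q, le_of_lt (by simpa using hq)⟩⟩
          have h : Filter.Tendsto (fun q : E2 => ‖q‖) (nhds 0) (nhds 0) := by
            simpa using continuous_norm.tendsto (0:E2)
          exact h.mono_left nhdsWithin_le_nhds
        have htendf : Filter.Tendsto (fun q : E2 => |f' ‖q‖|)
            (nhdsWithin 0 (Metric.ball 0 1)) (nhds 0) := by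
          have h2 := (hf'cont 0 h0mem).tendsto.comp htn
          rw [h0] at h2
          simpa [Function.comp] using h2.abs
        exact tendsto_of_tendsto_of_tendsto_of_le_of_le tendsto_const_nhds htendf
          (fun q => norm_nonneg _) (fun q => hbound q)
      · have hp1 : ‖p‖ < 1 := by simpa using hp
        have c1 : ContinuousWithinAt (fun q : E2 => f' ‖q‖) (Metric.ball 0 1) p := by
          apply (hf'cont ‖p‖ ⟨norm_nonneg p, hp1.le⟩).comp
            continuous_norm.continuousWithinAt
          intro q hq; exact ⟨norm_nonneg q, (by simpa using hq : ‖q‖ < 1).le⟩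
        have c2 : ContinuousWithinAt (fun q : E2 => ‖q‖⁻¹) (Metric.ball 0 1) p :=
          ((continuous_norm.continuousAt.inv₀ (norm_ne_zero_iff.2 hp0))).continuousWithinAt
        have c3 : ContinuousWithinAt (fun q : E2 => innerSL ℝ q) (Metric.ball 0 1) p :=
          ((innerSL ℝ).continuous.continuousAt (x := p)).continuousWithinAt
        exact (c1.mul c2).smul c3
    · refine ⟨{q : E2 | q ≠ 0}, isOpen_ne, hx0, ?_⟩
      have hnorm : ContDiffOn ℝ 1 (fun q : E2 => ‖q‖)
          (Metric.closedBall 0 1 ∩ {q : E2 | q ≠ 0}) := fun q hq =>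
        (contDiffAt_norm ℝ hq.2).contDiffWithinAt
      refine hF.comp hnorm ?_
      intro q hq
      exact ⟨norm_nonneg q, by simpa using hq.1⟩
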